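/- Under P_∞, the process {R_n − n}_{n≥1} is a zero-mean martingale with respect to the natural filtration F_n = σ(X₁, …, X_n); in particular E_∞ R_n = n for every n. -/

import Mathlib

open MeasureTheory ProbabilityTheory Filter
open scoped ENNReal NNReal

noncomputable section

/-- The Gamma(θ,1) density. -/
def gam (θ x : ℝ) : ℝ := gammaPDFReal θ 1 x

lemma measurable_Gamma : Measurable Real.Gamma := by
  apply measurable_of_isOpen
  intro v hv
  have hS : (Set.range (fun n : ℕ => -(n : ℝ))).Countable := Set.countable_range _
  have hkey : Real.Gamma ⁻¹' v =
      interior (Real.Gamma ⁻¹' v) ∪ (Real.Gamma ⁻¹' v ∩ Set.range fun n : ℕ => -(n : ℝ)) := by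
    apply Set.Subset.antisymm
    · intro x hx
      by_cases hxS : x ∈ Set.range fun n : ℕ => -(n : ℝ)
      · exact Or.inr ⟨hx, hxS⟩
      · left
        have hd : DifferentiableAt ℝ Real.Gamma x :=
          Real.differentiableAt_Gamma (fun m hm => hxS ⟨m, hm.symm⟩)
        rw [mem_interior_iff_mem_nhds]
        exact hd.continuousAt.preimage_mem_nhds (hv.mem_nhds hx)
    · rintro x (hx | hx)
      · exact interior_subset hx
      · exact hx.1
  rw [hkey]
  exact isOpen_interior.measurableSet.union
    ((hS.mono Set.inter_subset_right).measurableSet)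

lemma measurable_rpow2 : Measurable fun p : ℝ × ℝ => p.1 ^ p.2 := by
  have h : ∀ p : ℝ × ℝ, p.1 ^ p.2 =
      if p.1 = 0 then (if p.2 = 0 then 1 else 0)
      else if 0 < p.1 then Real.exp (Real.log p.1 * p.2)
      else Real.exp (Real.log p.1 * p.2) * Real.cos (p.2 * Real.pi) := by
    rintro ⟨x, y⟩
    rcases lt_trichotomy x 0 with h1 | h1 | h1
    · simp only [Real.rpow_def_of_neg h1, if_neg h1.ne, if_neg (not_lt.mpr h1.le)]
    · subst h1
      by_cases hy : y = 0 <;> simp [hy, Real.zero_rpow]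
    · simp only [Real.rpow_def_of_pos h1, if_neg h1.ne', if_pos h1]
  simp_rw [h]
  have hfst : MeasurableSet {p : ℝ × ℝ | p.1 = 0} :=
    measurable_fst (MeasurableSet.singleton 0)
  have hpos : MeasurableSet {p : ℝ × ℝ | 0 < p.1} :=
    measurable_fst measurableSet_Ioi
  have hsnd : MeasurableSet {p : ℝ × ℝ | p.2 = 0} :=
    measurable_snd (MeasurableSet.singleton 0)
  have hexp : Measurable fun p : ℝ × ℝ => Real.exp (Real.log p.1 * p.2) :=
    (((Real.measurable_log.comp measurable_fst).mul measurable_snd).exp)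
  exact Measurable.ite hfst (Measurable.ite hsnd measurable_const measurable_const)
    (Measurable.ite hpos hexp
      (hexp.mul ((measurable_snd.mul_const _).cos)))

lemma measurable_gam2 : Measurable fun p : ℝ × ℝ => gam p.1 p.2 := by
  have h : ∀ p : ℝ × ℝ, gam p.1 p.2 =
      if 0 ≤ p.2 then (1 : ℝ) ^ p.1 / Real.Gamma p.1 * p.2 ^ (p.1 - 1)
        * Real.exp (-(1 * p.2)) else 0 := fun p => rfl
  simp_rw [h]
  have hset : MeasurableSet {p : ℝ × ℝ | 0 ≤ p.2} := measurable_snd measurableSet_Ici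
  refine Measurable.ite hset ?_ measurable_const
  refine Measurable.mul (Measurable.mul ?_ ?_) ?_
  · exact (measurable_rpow2.comp (measurable_const.prodMk measurable_fst)).div
      (measurable_Gamma.comp measurable_fst)
  · exact measurable_rpow2.comp (measurable_snd.prodMk (measurable_fst.sub measurable_const))
  · exact ((measurable_snd.const_mul 1).neg.exp)

lemma gam_nonneg {θ : ℝ} (hθ : 0 < θ) (x : ℝ) : 0 ≤ gam θ x :=
  gammaPDFReal_nonneg hθ one_pos x

lemma ratio_lintegral {θ θ₀ : ℝ} (hθ : 0 < θ) (h0 : 0 < θ₀) :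
    ∫⁻ x, ENNReal.ofReal (gam θ x / gam θ₀ x) ∂(gammaMeasure θ₀ 1) = 1 := by
  rw [gammaMeasure]
  have hrw : gammaPDF θ₀ 1 = fun x => ENNReal.ofReal (gammaPDFReal θ₀ 1 x) := rfl
  simp only [gam, hrw]
  rw [lintegral_withDensity_eq_lintegral_mul _
    (measurable_gammaPDFReal θ₀ 1).ennreal_ofReal
    (by exact ((measurable_gammaPDFReal θ 1).div (measurable_gammaPDFReal θ₀ 1)).ennreal_ofReal :
      Measurable fun x => ENNReal.ofReal (gammaPDFReal θ 1 x / gammaPDFReal θ₀ 1 x))]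
  simp only [Pi.mul_apply]
  have hae : ∀ᵐ x : ℝ, x ≠ 0 := by
    rw [ae_iff]
    simpa using measure_singleton (0 : ℝ)
  have hcong : (fun x => ENNReal.ofReal (gammaPDFReal θ₀ 1 x)
      * ENNReal.ofReal (gammaPDFReal θ 1 x / gammaPDFReal θ₀ 1 x))
      =ᵐ[volume] gammaPDF θ 1 := by
    filter_upwards [hae] with x hx
    rcases lt_or_gt_of_ne hx with hlt | hgt
    · have h1 : gammaPDFReal θ 1 x = 0 := by simp [gammaPDFReal, not_le.mpr hlt]
      have h2 : gammaPDFReal θ₀ 1 x = 0 := by simp [gammaPDFReal, not_le.mpr hlt]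
      rw [gammaPDF_of_neg hlt, h1, h2]
      simp
    · have h2 : 0 < gammaPDFReal θ₀ 1 x := gammaPDFReal_pos h0 one_pos hgt
      rw [← ENNReal.ofReal_mul h2.le, mul_div_cancel₀ _ h2.ne']
      rfl
  rw [lintegral_congr_ae hcong]
  exact lintegral_gammaPDF_eq_one hθ one_pos

lemma engine {Ω : Type*} [mΩ : MeasurableSpace Ω] (P : Measure Ω) [IsProbabilityMeasure P]
    {θ₀ : ℝ} (hθ₀ : 0 < θ₀) {G θf W : Ω → ℝ}
    (hG : Measurable G) (hθf : Measurable θf) (hW : Measurable W)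
    (hind : IndepFun (fun ω => (G ω, θf ω)) W P)
    (hlawW : Measure.map W P = gammaMeasure θ₀ 1)
    (hGpos : ∀ᵐ ω ∂P, 0 ≤ G ω) (hθpos : ∀ᵐ ω ∂P, 0 < θf ω) :
    ∫⁻ ω, ENNReal.ofReal (G ω * (gam (θf ω) (W ω) / gam θ₀ (W ω))) ∂P
      = ∫⁻ ω, ENNReal.ofReal (G ω) ∂P := by
  set ν : Measure ℝ := gammaMeasure θ₀ 1 with hν
  haveI : IsProbabilityMeasure ν := isProbabilityMeasure_gammaMeasure hθ₀ one_pos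
  set Z : Ω → ℝ × ℝ := fun ω => (G ω, θf ω) with hZdef
  have hZ : Measurable Z := hG.prodMk hθf
  set φ : (ℝ × ℝ) × ℝ → ℝ≥0∞ :=
    fun q => ENNReal.ofReal (q.1.1 * (gam q.1.2 q.2 / gam θ₀ q.2)) with hφdef
  have hφ : Measurable φ := by
    apply Measurable.ennreal_ofReal
    exact (measurable_fst.fst).mul
      ((measurable_gam2.comp ((measurable_fst.snd).prodMk measurable_snd)).div
        ((measurable_gammaPDFReal θ₀ 1).comp measurable_snd))
  have hmap : Measure.map (fun ω => (Z ω, W ω)) P = (Measure.map Z P).prod ν := by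
    rw [← hlawW]
    exact (indepFun_iff_map_prod_eq_prod_map_map hZ.aemeasurable hW.aemeasurable).mp hind
  have h1 : ∫⁻ ω, ENNReal.ofReal (G ω * (gam (θf ω) (W ω) / gam θ₀ (W ω))) ∂P
      = ∫⁻ q, φ q ∂((Measure.map Z P).prod ν) := by
    rw [← hmap, lintegral_map hφ (hZ.prodMk hW)]
  have hinner : Measurable fun z : ℝ × ℝ => ∫⁻ x, φ (z, x) ∂ν := hφ.lintegral_prod_right'
  have h2 : ∫⁻ q, φ q ∂((Measure.map Z P).prod ν)
      = ∫⁻ ω, (∫⁻ x, φ (Z ω, x) ∂ν) ∂P := by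
    rw [MeasureTheory.lintegral_prod _ hφ.aemeasurable, lintegral_map hinner hZ]
  have h3 : (fun ω => ∫⁻ x, φ (Z ω, x) ∂ν) =ᵐ[P] fun ω => ENNReal.ofReal (G ω) := by
    filter_upwards [hGpos, hθpos] with ω hGω hθω
    have : (fun x => φ (Z ω, x))
        = fun x => ENNReal.ofReal (G ω) * ENNReal.ofReal (gam (θf ω) x / gam θ₀ x) := by
      funext x
      simp only [hφdef, hZdef]
      exact ENNReal.ofReal_mul hGω
    rw [this, lintegral_const_mul _ (by
      exact ((measurable_gam2.comp (measurable_const.prodMk measurable_id)).div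
        (measurable_gammaPDFReal θ₀ 1)).ennreal_ofReal)]
    rw [hν, ratio_lintegral hθω hθ₀, mul_one]
  rw [h1, h2, lintegral_congr_ae h3]

/-- under `P_∞`, the process `{R_n − n}` is a zero-mean martingale with
respect to the natural filtration `F_n = σ(X₁,…,X_n)`; in particular `E_∞ R_n = n` for
every `n`. -/
theorem srrs_martingale
    {Ω : Type*} [mΩ : MeasurableSpace Ω] (P : Measure Ω) [IsProbabilityMeasure P]
    (θ₀ : ℝ) (hθ₀ : 0 < θ₀)
    (X : ℕ → Ω → ℝ) (hXmeas : ∀ i, Measurable (X i))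
    (hindep : iIndepFun X P)
    (hlaw : ∀ i, 1 ≤ i → Measure.map (X i) P = gammaMeasure θ₀ 1)
    (s t : ℝ) (hs : 0 ≤ s) (ht : 0 ≤ t)
    (θnk : ℕ → ℕ → Ω → ℝ)
    (hθkk : ∀ k ω, θnk k k ω = if s = 0 ∨ t = 0 then θ₀ else s / t)
    (hθnk : ∀ k n ω, k < n →
      θnk k n ω = ((∑ i ∈ Finset.Ico k n, X i ω) + s) / (((n : ℝ) - (k : ℝ)) + t))
    (Λ : ℕ → ℕ → Ω → ℝ)
    (hΛ : ∀ k n ω, Λ k n ω = ∏ i ∈ Finset.Icc k n, gam (θnk k i ω) (X i ω) / gam θ₀ (X i ω))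
    (R : ℕ → Ω → ℝ) (hR : ∀ n ω, R n ω = ∑ k ∈ Finset.Icc 1 n, Λ k n ω)
    -- the natural filtration F_n = σ(X₁,…,X_n)
    (F : Filtration ℕ mΩ)
    (hF : ∀ n, (F n : MeasurableSpace Ω)
      = ⨆ i ∈ Finset.Icc 1 n, MeasurableSpace.comap (X i) inferInstance) :
    Martingale (fun n ω => R n ω - (n : ℝ)) F P ∧
      ∀ n : ℕ, ∫ ω, R n ω ∂P = (n : ℝ) := by
  classical
  -- the constant value θnk k k
  have hθcpos : 0 < (if s = 0 ∨ t = 0 then θ₀ else s / t) := by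
    split_ifs with h
    · exact hθ₀
    · push_neg at h
      exact div_pos (lt_of_le_of_ne hs (Ne.symm h.1)) (lt_of_le_of_ne ht (Ne.symm h.2))
  -- X i is F n–measurable for i ∈ [1, n]
  have hXF : ∀ n i, 1 ≤ i → i ≤ n → Measurable[F n] (X i) := by
    intro n i h1 h2
    have hle : MeasurableSpace.comap (X i) inferInstance ≤ F n := by
      rw [hF n]
      exact le_biSup (fun i => MeasurableSpace.comap (X i) (inferInstance : MeasurableSpace ℝ)) (Finset.mem_Icc.mpr ⟨h1, h2⟩)
    exact fun u hu => hle _ ⟨u, hu, rfl⟩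
  -- θnk k i is F n–measurable for 1 ≤ k ≤ i ≤ n+1
  have hθmeas : ∀ n k i, 1 ≤ k → k ≤ i → i ≤ n + 1 → Measurable[F n] (θnk k i) := by
    intro n k i hk hki hin
    rcases eq_or_lt_of_le hki with rfl | hki'
    · have : θnk k k = fun _ => if s = 0 ∨ t = 0 then θ₀ else s / t :=
        funext fun ω => hθkk k ω
      rw [this]; exact measurable_const
    · have : θnk k i = fun ω => ((∑ j ∈ Finset.Ico k i, X j ω) + s) / (((i : ℝ) - (k : ℝ)) + t) :=
        funext fun ω => hθnk k i ω hki'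
      rw [this]
      refine Measurable.div_const (Measurable.add_const ?_ s) _
      refine Finset.measurable_sum _ fun j hj => ?_
      have hj' := Finset.mem_Ico.mp hj
      exact hXF n j (le_trans hk hj'.1) (by omega)
  -- Λ k n is F n–measurable for 1 ≤ k
  have hΛmeasF : ∀ n k, 1 ≤ k → Measurable[F n] (Λ k n) := by
    intro n k hk
    have hrw : Λ k n = fun ω => ∏ i ∈ Finset.Icc k n, gam (θnk k i ω) (X i ω) / gam θ₀ (X i ω) :=
      funext fun ω => hΛ k n ω
    rw [hrw]
    refine Finset.measurable_prod _ fun i hi => ?_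
    have hi' := Finset.mem_Icc.mp hi
    have hXi : Measurable[F n] (X i) := hXF n i (le_trans hk hi'.1) hi'.2
    have h1 : Measurable[F n] fun ω => gam (θnk k i ω) (X i ω) :=
      measurable_gam2.comp ((hθmeas n k i hk hi'.1 (le_trans hi'.2 (Nat.le_succ n))).prodMk hXi)
    exact h1.div ((measurable_gammaPDFReal θ₀ 1).comp hXi)
  -- a.e. positivity of the X i
  have hXpos : ∀ i, 1 ≤ i → ∀ᵐ ω ∂P, 0 < X i ω := by
    intro i hi
    have hnull : P (X i ⁻¹' Set.Iic 0) = 0 := by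
      rw [← Measure.map_apply (hXmeas i) measurableSet_Iic, hlaw i hi, gammaMeasure,
        withDensity_apply _ measurableSet_Iic]
      have hz : ∀ᵐ x ∂(volume.restrict (Set.Iic (0 : ℝ))), gammaPDF θ₀ 1 x = 0 := by
        have h1 : ∀ᵐ x : ℝ, x ≠ 0 := by
          rw [ae_iff]; simpa using measure_singleton (0 : ℝ)
        filter_upwards [ae_restrict_of_ae h1,
          ae_restrict_mem measurableSet_Iic] with x hx hx'
        exact gammaPDF_of_neg (lt_of_le_of_ne hx' hx)
      rw [lintegral_congr_ae hz, lintegral_zero]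
    rw [ae_iff]
    convert hnull using 2
    ext ω
    simp [not_lt]
  -- a.e. positivity of θnk k i for 1 ≤ k ≤ i
  have hθpos : ∀ k i, 1 ≤ k → k ≤ i → ∀ᵐ ω ∂P, 0 < θnk k i ω := by
    intro k i hk hki
    rcases eq_or_lt_of_le hki with rfl | hki'
    · filter_upwards with ω
      rw [hθkk k ω]; exact hθcpos
    · have hae : ∀ᵐ ω ∂P, ∀ j ∈ Finset.Ico k i, 0 < X j ω :=
        (Finset.eventually_all (Finset.Ico k i)).mpr fun j hj =>
          hXpos j (le_trans hk (Finset.mem_Ico.mp hj).1)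
      filter_upwards [hae] with ω hω
      rw [hθnk k i ω hki']
      have hnum : 0 < (∑ j ∈ Finset.Ico k i, X j ω) + s := by
        have hpos : 0 < ∑ j ∈ Finset.Ico k i, X j ω :=
          Finset.sum_pos hω ⟨k, Finset.mem_Ico.mpr ⟨le_refl k, hki'⟩⟩
        linarith
      have hden : 0 < ((i : ℝ) - (k : ℝ)) + t := by
        have : (k : ℝ) + 1 ≤ (i : ℝ) := by exact_mod_cast hki'
        linarith
      exact div_pos hnum hden
  -- a.e. nonnegativity of Λ k n
  have hΛnn : ∀ k n, 1 ≤ k → ∀ᵐ ω ∂P, 0 ≤ Λ k n ω := by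
    intro k n hk
    have hae : ∀ᵐ ω ∂P, ∀ i ∈ Finset.Icc k n, 0 < θnk k i ω :=
      (Finset.eventually_all (Finset.Icc k n)).mpr fun i hi =>
        hθpos k i hk (Finset.mem_Icc.mp hi).1
    filter_upwards [hae] with ω hω
    rw [hΛ k n ω]
    exact Finset.prod_nonneg fun i hi =>
      div_nonneg (gam_nonneg (hω i hi) _) (gam_nonneg hθ₀ _)
  -- independence of F n and X (n+1)
  have hindepF : ∀ n, Indep (F n) (MeasurableSpace.comap (X (n + 1)) inferInstance) P := by
    intro n
    have hd : Disjoint (↑(Finset.Icc 1 n) : Set ℕ) {n + 1} := by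
      simp only [Set.disjoint_singleton_right, Finset.coe_Icc, Set.mem_Icc]
      omega
    have h := ProbabilityTheory.indep_iSup_of_disjoint
      (m := fun i => MeasurableSpace.comap (X i) inferInstance)
      (fun i => (hXmeas i).comap_le) hindep hd
    have h1 : (⨆ i ∈ (↑(Finset.Icc 1 n) : Set ℕ), MeasurableSpace.comap (X i) inferInstance)
        = F n := by
      rw [hF n]
      rfl
    have h2 : (⨆ i ∈ ({n + 1} : Set ℕ), MeasurableSpace.comap (X i) inferInstance)
        = MeasurableSpace.comap (X (n + 1)) inferInstance := by
      simp
    rwa [h1, h2] at h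
  -- key step: indicator integrals are preserved
  have hstep : ∀ n k, 1 ≤ k → k ≤ n + 1 → ∀ A : Set Ω, MeasurableSet[F n] A →
      ∫⁻ ω, ENNReal.ofReal (A.indicator (Λ k (n + 1)) ω) ∂P
        = ∫⁻ ω, ENNReal.ofReal (A.indicator (Λ k n) ω) ∂P := by
    intro n k hk hkn A hA
    set G : Ω → ℝ := A.indicator (Λ k n) with hGdef
    have hGF : Measurable[F n] G := (hΛmeasF n k hk).indicator hA
    have hθfF : Measurable[F n] (θnk k (n + 1)) := hθmeas n k (n + 1) hk hkn le_rfl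
    have hptw : ∀ ω, A.indicator (Λ k (n + 1)) ω
        = G ω * (gam (θnk k (n + 1) ω) (X (n + 1) ω) / gam θ₀ (X (n + 1) ω)) := by
      intro ω
      by_cases hω : ω ∈ A
      · rw [Set.indicator_of_mem hω, hGdef, Set.indicator_of_mem hω, hΛ k (n + 1) ω,
          Finset.prod_Icc_succ_top hkn, hΛ k n ω]
      · rw [Set.indicator_of_notMem hω, hGdef, Set.indicator_of_notMem hω, zero_mul]
    have hind : IndepFun (fun ω => (G ω, θnk k (n + 1) ω)) (X (n + 1)) P := by
      have hZ : Measurable[F n] fun ω => (G ω, θnk k (n + 1) ω) := hGF.prodMk hθfF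
      exact indep_of_indep_of_le_left (hindepF n) (measurable_iff_comap_le.mp hZ)
    have hGpos : ∀ᵐ ω ∂P, 0 ≤ G ω := by
      filter_upwards [hΛnn k n hk] with ω hω
      exact Set.indicator_nonneg (fun _ _ => hω) ω
    calc ∫⁻ ω, ENNReal.ofReal (A.indicator (Λ k (n + 1)) ω) ∂P
        = ∫⁻ ω, ENNReal.ofReal
            (G ω * (gam (θnk k (n + 1) ω) (X (n + 1) ω) / gam θ₀ (X (n + 1) ω))) ∂P := by
          exact lintegral_congr fun ω => by rw [hptw ω]
      _ = ∫⁻ ω, ENNReal.ofReal (G ω) ∂P :=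
          engine P hθ₀ (hGF.mono (F.le n) le_rfl) (hθfF.mono (F.le n) le_rfl)
            (hXmeas (n + 1)) hind (hlaw (n + 1) (Nat.le_add_left 1 n)) hGpos
            (hθpos k (n + 1) hk hkn)
  -- lintegral of Λ k n is 1
  have hlint : ∀ k n, 1 ≤ k → ∫⁻ ω, ENNReal.ofReal (Λ k n ω) ∂P = 1 := by
    intro k n hk
    induction n with
    | zero =>
        have h1 : Λ k 0 = fun _ => 1 := by
          funext ω
          rw [hΛ k 0 ω, Finset.Icc_eq_empty (by omega), Finset.prod_empty]
        rw [h1]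
        simp
    | succ n ih =>
        by_cases hkn : k ≤ n + 1
        · have h := hstep n k hk hkn Set.univ MeasurableSet.univ
          simpa [Set.indicator_univ] using h.trans (by simpa [Set.indicator_univ] using ih)
        · have h1 : Λ k (n + 1) = fun _ => 1 := by
            funext ω
            rw [hΛ k (n + 1) ω, Finset.Icc_eq_empty (by omega), Finset.prod_empty]
          rw [h1]
          simp
  -- integrability
  have hInt : ∀ k n, 1 ≤ k → Integrable (Λ k n) P := by
    intro k n hk
    refine ⟨((hΛmeasF n k hk).mono (F.le n) le_rfl).aestronglyMeasurable, ?_⟩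
    rw [hasFiniteIntegral_iff_ofReal (hΛnn k n hk), hlint k n hk]
    exact ENNReal.one_lt_top
  -- expectation of Λ is 1
  have hmean : ∀ k n, 1 ≤ k → ∫ ω, Λ k n ω ∂P = 1 := by
    intro k n hk
    rw [integral_eq_lintegral_of_nonneg_ae (hΛnn k n hk)
      ((hΛmeasF n k hk).mono (F.le n) le_rfl).aestronglyMeasurable, hlint k n hk]
    simp
  -- set-integral equality
  have hset : ∀ n k, 1 ≤ k → k ≤ n + 1 → ∀ A : Set Ω, MeasurableSet[F n] A →
      ∫ ω in A, Λ k (n + 1) ω ∂P = ∫ ω in A, Λ k n ω ∂P := by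
    intro n k hk hkn A hA
    have hA' : MeasurableSet A := F.le n A hA
    have key : ∀ m : ℕ, ∫ ω in A, Λ k m ω ∂P
        = (∫⁻ ω, ENNReal.ofReal (A.indicator (Λ k m) ω) ∂P).toReal := by
      intro m
      rw [integral_eq_lintegral_of_nonneg_ae (ae_restrict_of_ae (hΛnn k m hk))
        ((hΛmeasF m k hk).mono (F.le m) le_rfl).aestronglyMeasurable.restrict]
      congr 1
      rw [← lintegral_indicator hA']
      refine lintegral_congr fun ω => ?_
      by_cases hω : ω ∈ A
      · simp [Set.indicator_of_mem hω]
      · simp [Set.indicator_of_notMem hω]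
    rw [key (n + 1), key n, hstep n k hk hkn A hA]
  -- conditional expectation identity
  have hce : ∀ n k, 1 ≤ k → k ≤ n + 1 → Λ k n =ᵐ[P] P[Λ k (n + 1)|F n] := by
    intro n k hk hkn
    haveI : SigmaFinite (P.trim (F.le n)) := by
      haveI : IsFiniteMeasure (P.trim (F.le n)) := isFiniteMeasure_trim _
      infer_instance
    exact ae_eq_condExp_of_forall_setIntegral_eq (F.le n) (hInt k (n + 1) hk)
      (fun A hA _ => (hInt k n hk).integrableOn)
      (fun A hA _ => (hset n k hk hkn A hA).symm)
      (StronglyMeasurable.aestronglyMeasurable (hΛmeasF n k hk).stronglyMeasurable)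
  -- expectation of R n
  have hmeanR : ∀ n : ℕ, ∫ ω, R n ω ∂P = (n : ℝ) := by
    intro n
    have hrw : (fun ω => R n ω) = fun ω => ∑ k ∈ Finset.Icc 1 n, Λ k n ω :=
      funext fun ω => hR n ω
    rw [hrw, integral_finset_sum _ fun k hk => hInt k n (Finset.mem_Icc.mp hk).1,
      Finset.sum_congr rfl fun k hk => hmean k n (Finset.mem_Icc.mp hk).1]
    simp [Nat.card_Icc]
  have hRInt : ∀ n : ℕ, Integrable (fun ω => R n ω - (n : ℝ)) P := by
    intro n
    have h1 : Integrable (fun ω => R n ω) P := by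
      have hrw : (fun ω => R n ω) = fun ω => ∑ k ∈ Finset.Icc 1 n, Λ k n ω :=
        funext fun ω => hR n ω
      rw [hrw]
      exact integrable_finset_sum _ fun k hk => hInt k n (Finset.mem_Icc.mp hk).1
    exact h1.sub (integrable_const _)
  refine ⟨martingale_nat ?_ hRInt ?_, hmeanR⟩
  · -- adapted
    intro n
    show StronglyMeasurable[F n] fun ω => R n ω - (n : ℝ)
    have hrw : (fun ω => R n ω - (n : ℝ))
        = fun ω => (∑ k ∈ Finset.Icc 1 n, Λ k n ω) - (n : ℝ) :=
      funext fun ω => by rw [hR n ω]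
    rw [hrw]
    exact ((Finset.measurable_sum _ fun k hk =>
      hΛmeasF n k (Finset.mem_Icc.mp hk).1).sub measurable_const).stronglyMeasurable
  · -- one-step martingale property
    intro n
    have hc : ((n + 1 : ℕ) : ℝ) = (n : ℝ) + 1 := by push_cast; ring
    have hIntR1 : Integrable (fun ω => R (n + 1) ω) P := by
      have hrw : (fun ω => R (n + 1) ω) = fun ω => ∑ k ∈ Finset.Icc 1 (n + 1), Λ k (n + 1) ω :=
        funext fun ω => hR (n + 1) ω
      rw [hrw]
      exact integrable_finset_sum _ fun k hk => hInt k (n + 1) (Finset.mem_Icc.mp hk).1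
    have hsplit : (fun ω => R (n + 1) ω - ((n + 1 : ℕ) : ℝ))
        = (fun ω => R (n + 1) ω) - (fun _ => ((n + 1 : ℕ) : ℝ)) := rfl
    have h1 : P[fun ω => R (n + 1) ω - ((n + 1 : ℕ) : ℝ)|F n]
        =ᵐ[P] P[fun ω => R (n + 1) ω|F n] - P[fun _ => ((n + 1 : ℕ) : ℝ)|F n] := by
      rw [hsplit]
      exact condExp_sub hIntR1 (integrable_const _) (F n)
    have hsumrw : (fun ω => R (n + 1) ω) = ∑ k ∈ Finset.Icc 1 (n + 1), Λ k (n + 1) := by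
      funext ω
      rw [hR (n + 1) ω, Finset.sum_apply]
    have h2 : P[fun ω => R (n + 1) ω|F n]
        =ᵐ[P] ∑ k ∈ Finset.Icc 1 (n + 1), P[Λ k (n + 1)|F n] := by
      rw [hsumrw]
      exact condExp_finsetSum (fun k hk => hInt k (n + 1) (Finset.mem_Icc.mp hk).1) (F n)
    have hkey : ∀ᵐ ω ∂P, ∀ k ∈ Finset.Icc 1 (n + 1), Λ k n ω = (P[Λ k (n + 1)|F n]) ω :=
      (Finset.eventually_all _).mpr fun k hk =>
        hce n k (Finset.mem_Icc.mp hk).1 (Finset.mem_Icc.mp hk).2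
    filter_upwards [h1, h2, hkey] with ω hω1 hω2 hω3
    rw [hω1]
    simp only [Pi.sub_apply, condExp_const (F.le n)]
    rw [hω2, Finset.sum_apply]
    have hsum3 : ∑ k ∈ Finset.Icc 1 (n + 1), (P[Λ k (n + 1)|F n]) ω
        = ∑ k ∈ Finset.Icc 1 (n + 1), Λ k n ω :=
      Finset.sum_congr rfl fun k hk => (hω3 k hk).symm
    rw [hsum3, Finset.sum_Icc_succ_top (by omega : 1 ≤ n + 1)]
    have hone : Λ (n + 1) n ω = 1 := by
      rw [hΛ (n + 1) n ω, Finset.Icc_eq_empty (by omega), Finset.prod_empty]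
    rw [hone, ← hR n ω, hc]
    ring
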